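/- In the k-boundary setting, every discontinuity point of f_{θ₀} lying in the open interval (0,1) is a discontinuity point of g. -/

import Mathlib

open MeasureTheory Set Filter

noncomputable section

open scoped Classical in
/-- The k-boundary hypothesis with breakpoints `θ`: the alternating step
function starting at value `0`, i.e. `f_θ(x) = (#{i : θ i ≤ x}) mod 2`. -/
noncomputable def kBoundary {k : ℕ} (θ : Fin k → ℝ) (x : ℝ) : Bool :=
  decide ((Finset.univ.filter fun i => θ i ≤ x).card % 2 = 1)

open scoped Classical in
lemma kBoundary_congr {k : ℕ} (θ θ' : Fin k → ℝ) (x y : ℝ)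
    (h : ∀ i, θ i ≤ x ↔ θ' i ≤ y) : kBoundary θ x = kBoundary θ' y := by
  have hcard : (Finset.univ.filter fun i => θ i ≤ x).card
      = (Finset.univ.filter fun i => θ' i ≤ y).card := by
    congr 1
    apply Finset.filter_congr
    intro i _
    simp [h i]
  simp only [kBoundary, hcard]

lemma kB_improve {k : ℕ} (μ : Measure ℝ) [IsProbabilityMeasure μ]
    (habs' : volume.restrict (Icc (0:ℝ) 1) ≪ μ)
    (g : ℝ → Bool) (θ₀ θ' : Fin k → ℝ) (a b : ℝ) (hab : a < b)
    (hsub : Ico a b ⊆ Icc (0:ℝ) 1)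
    (h1 : ∀ x ∈ Ico a b, kBoundary θ₀ x ≠ g x)
    (h2 : ∀ x ∈ Ico a b, kBoundary θ' x = g x)
    (h3 : ∀ x, x ∉ Ico a b → kBoundary θ' x = kBoundary θ₀ x)
    (hopt : μ {x | kBoundary θ₀ x ≠ g x} ≤ μ {x | kBoundary θ' x ≠ g x}) : False := by
  have hEset : {x | kBoundary θ₀ x ≠ g x} = {x | kBoundary θ' x ≠ g x} ∪ Ico a b := by
    ext x
    by_cases hx : x ∈ Ico a b
    · simp [hx, h1 x hx]
    · simp [hx, h3 x hx]
  have hdisj : Disjoint {x | kBoundary θ' x ≠ g x} (Ico a b) := by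
    rw [Set.disjoint_left]
    intro x hx hxI
    exact hx (h2 x hxI)
  have hmeq : μ {x | kBoundary θ₀ x ≠ g x}
      = μ {x | kBoundary θ' x ≠ g x} + μ (Ico a b) := by
    rw [hEset, measure_union hdisj measurableSet_Ico]
  have hIzero : μ (Ico a b) = 0 := by
    have h2' : μ {x | kBoundary θ' x ≠ g x} + μ (Ico a b)
        ≤ μ {x | kBoundary θ' x ≠ g x} + 0 := by
      rw [add_zero]; rw [hmeq] at hopt; exact hopt
    have := (ENNReal.add_le_add_iff_left (measure_ne_top μ _)).mp h2'
    exact le_antisymm this zero_le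
  have hv : volume.restrict (Icc (0:ℝ) 1) (Ico a b) = 0 := habs' hIzero
  rw [Measure.restrict_apply measurableSet_Ico, Set.inter_eq_left.mpr hsub,
    Real.volume_Ico] at hv
  simp only [ENNReal.ofReal_eq_zero] at hv
  linarith

/-- in the k-boundary setting, every discontinuity point of
`f_{θ₀}` lying in `(0,1)` is a discontinuity point of `g` (a function into a
discrete set is discontinuous at `c` iff it is not locally constant at `c`). -/
theorem kBoundary_optimal_breakpoints_are_transitions
    {k M : ℕ} (μ : Measure ℝ) [IsProbabilityMeasure μ]
    (habs : μ ≪ volume.restrict (Icc (0 : ℝ) 1))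
    (habs' : volume.restrict (Icc (0 : ℝ) 1) ≪ μ)
    (g : ℝ → Bool) (s : Finset ℝ) (hscard : s.card ≤ M)
    (hsIoo : ∀ b ∈ s, b ∈ Ioo (0 : ℝ) 1)
    (hstep : ∀ x y : ℝ, x ≤ y → (∀ b ∈ s, ¬(x < b ∧ b ≤ y)) → g x = g y)
    (θ₀ : Fin k → ℝ) (hθ₀mono : Monotone θ₀) (hθ₀mem : ∀ i, θ₀ i ∈ Icc (0 : ℝ) 1)
    (hθ₀opt : ∀ θ : Fin k → ℝ, Monotone θ → (∀ i, θ i ∈ Icc (0 : ℝ) 1) →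
      μ {x | kBoundary θ₀ x ≠ g x} ≤ μ {x | kBoundary θ x ≠ g x}) :
    ∀ c ∈ Ioo (0 : ℝ) 1,
      ¬ (∀ᶠ y in nhds c, kBoundary θ₀ y = kBoundary θ₀ c) →
      ¬ (∀ᶠ y in nhds c, g y = g c) := by
  intro c hc hf hg
  obtain ⟨hc0, hc1⟩ := hc
  rw [Metric.eventually_nhds_iff] at hg
  obtain ⟨ε, hε, hball⟩ := hg
  -- positive lower bound on distances of breakpoints ≠ c to c
  set F : Finset ℝ :=
    insert 1 ((Finset.univ.filter fun i => θ₀ i ≠ c).image fun i => |θ₀ i - c|) with hF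
  have hFne : F.Nonempty := ⟨1, Finset.mem_insert_self _ _⟩
  set δ := F.min' hFne with hδdef
  have hδpos : 0 < δ := by
    rw [hδdef, Finset.lt_min'_iff]
    intro x hx
    rcases Finset.mem_insert.mp hx with rfl | hx
    · norm_num
    · obtain ⟨i, hi, rfl⟩ := Finset.mem_image.mp hx
      exact abs_pos.mpr (sub_ne_zero.mpr (Finset.mem_filter.mp hi).2)
  have hδle : ∀ i, θ₀ i ≠ c → δ ≤ |θ₀ i - c| := by
    intro i hi
    exact Finset.min'_le _ _ (Finset.mem_insert_of_mem
      (Finset.mem_image.mpr ⟨i, Finset.mem_filter.mpr ⟨Finset.mem_univ i, hi⟩, rfl⟩))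
  set η := min (min (ε/2) δ) (min c (1-c)) with hηdef
  have hηpos : 0 < η := by
    simp only [hηdef, lt_min_iff]
    exact ⟨⟨by linarith, hδpos⟩, hc0, by linarith⟩
  have hηε : η < ε := by
    have : η ≤ ε/2 := le_trans (min_le_left _ _) (min_le_left _ _)
    linarith
  have hηδ : η ≤ δ := le_trans (min_le_left _ _) (min_le_right _ _)
  have hηc : η ≤ c := le_trans (min_le_right _ _) (min_le_left _ _)
  have hη1c : η ≤ 1 - c := le_trans (min_le_right _ _) (min_le_right _ _)
  -- dichotomy for breakpoints ≠ c
  have hdich : ∀ i, θ₀ i ≠ c → θ₀ i ≤ c - η ∨ c + η ≤ θ₀ i := by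
    intro i hi
    have h := le_trans hηδ (hδle i hi)
    rcases le_total (θ₀ i) c with h' | h'
    · left; rw [abs_of_nonpos (by linarith)] at h; linarith
    · right; rw [abs_of_nonneg (by linarith)] at h; linarith
  -- g is constant on [c-η, c+η)
  have hgconst : ∀ x, c - η ≤ x → x < c + η → g x = g c := by
    intro x h1 h2
    apply hball
    rw [Real.dist_eq, abs_lt]
    constructor <;> linarith
  -- value of f left and right of c
  have hL : ∀ x, c - η ≤ x → x < c → kBoundary θ₀ x = kBoundary θ₀ (c - η) := by
    intro x h1 h2
    apply kBoundary_congr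
    intro i
    constructor
    · intro h
      have hi : θ₀ i ≠ c := by intro he; rw [he] at h; linarith
      rcases hdich i hi with h' | h'
      · exact h'
      · linarith
    · intro h; linarith
  have hR : ∀ x, c ≤ x → x < c + η → kBoundary θ₀ x = kBoundary θ₀ c := by
    intro x h1 h2
    apply kBoundary_congr
    intro i
    constructor
    · intro h
      by_cases hi : θ₀ i = c
      · linarith [hi.le]
      · rcases hdich i hi with h' | h'
        · linarith
        · linarith
    · intro h; linarith
  -- A ≠ B
  have hAB : kBoundary θ₀ (c - η) ≠ kBoundary θ₀ c := by
    intro hABeq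
    apply hf
    rw [Metric.eventually_nhds_iff]
    refine ⟨η, hηpos, fun y hy => ?_⟩
    rw [Real.dist_eq, abs_lt] at hy
    rcases le_or_gt c y with h' | h'
    · exact hR y h' (by linarith)
    · rw [hL y (by linarith) h', hABeq]
  by_cases hgB : g c = kBoundary θ₀ c
  · -- move the breakpoints at c down to c - η
    set θ' : Fin k → ℝ := fun i => if θ₀ i = c then c - η else θ₀ i with hθ'
    have hmono : Monotone θ' := by
      intro i j hij
      have hm := hθ₀mono hij
      by_cases hi : θ₀ i = c <;> by_cases hj : θ₀ j = c
      · simp [hθ', hi, hj]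
      · simp only [hθ', if_pos hi, if_neg hj]
        rw [hi] at hm; linarith
      · simp only [hθ', if_neg hi, if_pos hj]
        rw [hj] at hm
        rcases hdich i hi with h' | h' <;> linarith
      · simp only [hθ', if_neg hi, if_neg hj]; exact hm
    have hmem : ∀ i, θ' i ∈ Icc (0:ℝ) 1 := by
      intro i
      by_cases hi : θ₀ i = c
      · simp only [hθ', if_pos hi]
        constructor <;> [linarith; linarith]
      · simp only [hθ', if_neg hi]; exact hθ₀mem i
    have hmid : ∀ x, c - η ≤ x → x < c + η → kBoundary θ' x = kBoundary θ₀ c := by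
      intro x h1 h2
      apply kBoundary_congr
      intro i
      by_cases hi : θ₀ i = c
      · simp only [hθ', if_pos hi, hi]
        constructor <;> intro <;> linarith
      · simp only [hθ', if_neg hi]
        rcases hdich i hi with h' | h' <;> constructor <;> intro <;> linarith
    have hout : ∀ x, x ∉ Ico (c - η) c → kBoundary θ' x = kBoundary θ₀ x := by
      intro x hx
      rw [Set.mem_Ico, not_and_or, not_le, not_lt] at hx
      apply kBoundary_congr
      intro i
      by_cases hi : θ₀ i = c
      · simp only [hθ', if_pos hi, hi]
        rcases hx with hx | hx <;> constructor <;> intro <;> linarith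
      · simp only [hθ', if_neg hi]
    refine kB_improve μ habs' g θ₀ θ' (c - η) c (by linarith)
      (fun x hx => ⟨by simp at hx; linarith [hx.1], by simp at hx; linarith [hx.2]⟩)
      ?_ ?_ hout (hθ₀opt θ' hmono hmem)
    · intro x hx
      rw [Set.mem_Ico] at hx
      rw [hL x hx.1 hx.2, hgconst x hx.1 (by linarith), hgB]
      exact hAB
    · intro x hx
      rw [Set.mem_Ico] at hx
      rw [hmid x hx.1 (by linarith), hgconst x hx.1 (by linarith), hgB]
  · -- g c = A; move the breakpoints at c up to c + η
    have hgA : g c = kBoundary θ₀ (c - η) := by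
      revert hAB hgB
      generalize kBoundary θ₀ (c - η) = A
      generalize kBoundary θ₀ c = B
      generalize g c = G
      cases A <;> cases B <;> cases G <;> simp
    set θ' : Fin k → ℝ := fun i => if θ₀ i = c then c + η else θ₀ i with hθ'
    have hmono : Monotone θ' := by
      intro i j hij
      have hm := hθ₀mono hij
      by_cases hi : θ₀ i = c <;> by_cases hj : θ₀ j = c
      · simp [hθ', hi, hj]
      · simp only [hθ', if_pos hi, if_neg hj]
        rw [hi] at hm
        rcases hdich j hj with h' | h' <;> linarith
      · simp only [hθ', if_neg hi, if_pos hj]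
        rw [hj] at hm; linarith
      · simp only [hθ', if_neg hi, if_neg hj]; exact hm
    have hmem : ∀ i, θ' i ∈ Icc (0:ℝ) 1 := by
      intro i
      by_cases hi : θ₀ i = c
      · simp only [hθ', if_pos hi]
        constructor <;> [linarith; linarith]
      · simp only [hθ', if_neg hi]; exact hθ₀mem i
    have hmid : ∀ x, c - η ≤ x → x < c + η → kBoundary θ' x = kBoundary θ₀ (c - η) := by
      intro x h1 h2
      apply kBoundary_congr
      intro i
      by_cases hi : θ₀ i = c
      · simp only [hθ', if_pos hi, hi]
        constructor <;> intro <;> linarith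
      · simp only [hθ', if_neg hi]
        rcases hdich i hi with h' | h' <;> constructor <;> intro <;> linarith
    have hout : ∀ x, x ∉ Ico c (c + η) → kBoundary θ' x = kBoundary θ₀ x := by
      intro x hx
      rw [Set.mem_Ico, not_and_or, not_le, not_lt] at hx
      apply kBoundary_congr
      intro i
      by_cases hi : θ₀ i = c
      · simp only [hθ', if_pos hi, hi]
        rcases hx with hx | hx <;> constructor <;> intro <;> linarith
      · simp only [hθ', if_neg hi]
    refine kB_improve μ habs' g θ₀ θ' c (c + η) (by linarith)
      (fun x hx => ⟨by simp at hx; linarith [hx.1], by simp at hx; linarith [hx.2]⟩)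
      ?_ ?_ hout (hθ₀opt θ' hmono hmem)
    · intro x hx
      rw [Set.mem_Ico] at hx
      rw [hR x hx.1 hx.2, hgconst x (by linarith) hx.2, hgA]
      exact fun h => hAB h.symm
    · intro x hx
      rw [Set.mem_Ico] at hx
      rw [hmid x (by linarith) hx.2, hgconst x (by linarith) hx.2, hgA]

end
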